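/- Let H = ℓ²(ℕ) with canonical orthonormal basis {e_j}_{j∈ℕ}, and let K be the orthogonal projection of H onto the closed span of {e_j : j ≥ 2}. Define Φ = {φ_j}_{j∈ℕ} by φ_{2k−1} = e_k and φ_{2k} = 0 for all k ≥ 1, and Ψ = {ψ_j}_{j∈ℕ} by ψ₁ = 0, ψ₂ = e₁, ψ₃ = 0, ψ₄ = e₂, and ψ_{2k+1} = ψ_{2k+2} = e_{k+1} for all k ≥ 2 (so Φ = {e₁, 0, e₂, 0, e₃, 0, …} and Ψ = {0, e₁, 0, e₂, e₃, e₃, e₄, e₄, …}). Then Φ and Ψ are K-frames for H, but they are not K-woven: for σ = ℕ ∖ {1, 3}, the family {φ_j}_{j∈σ} ∪ {ψ_j}_{j∈σᶜ} is not a K-frame for H, since ∑_{j∈σ} |⟨e₂, φ_j⟩|² + ∑_{j∈σᶜ} |⟨e₂, ψ_j⟩|² = 0 while ‖K* e₂‖² = 1. -/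

import Mathlib

/- STATEMENT 14: in H = ℓ²(ℕ) (0-based canonical basis E 0, E 1, …; the paper's e_j is
E (j-1)), with K the orthogonal projection onto the closed span of {E k : k ≥ 1},
Φ = {e₁, 0, e₂, 0, e₃, 0, …} and Ψ = {0, e₁, 0, e₂, e₃, e₃, e₄, e₄, …} are K-frames but
are not K-woven: for σ = ℕ ∖ {1, 3} (0-based: ℕ ∖ {0, 2}) the weaving is not a K-frame,
since the weaving sum at e₂ = E 1 is 0 while ‖K* e₂‖² = 1. -/

local notation "⟪" x ", " y "⟫" => @inner ℂ _ _ x y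

noncomputable section

abbrev H2 : Type := lp (fun _ : ℕ => ℂ) 2

/-- The canonical orthonormal basis of ℓ²(ℕ) (0-based; the paper's `e_j` is `E (j-1)`). -/
def E (n : ℕ) : H2 := lp.single 2 n 1

/-- The closed span of {E k : k ≥ 1}, i.e. of the paper's {e_j : j ≥ 2}. -/
def S : Submodule ℂ H2 :=
  (Submodule.span ℂ (Set.range fun k : ℕ => E (k + 1))).topologicalClosure

/-- Φ = {e₁, 0, e₂, 0, e₃, 0, …} (0-based indexing): φ_{2k−1} = e_k, φ_{2k} = 0. -/
def Φ (n : ℕ) : H2 := if Even n then E (n / 2) else 0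

/-- Ψ = {0, e₁, 0, e₂, e₃, e₃, e₄, e₄, …} (0-based indexing). -/
def Ψ (n : ℕ) : H2 := if n = 0 ∨ n = 2 then 0 else E (n / 2)

/-- σ = ℕ ∖ {1, 3} in the paper's 1-based indexing, i.e. ℕ ∖ {0, 2} in 0-based indexing. -/
def σ₀ : Set ℕ := {n | n ≠ 0 ∧ n ≠ 2}

/-- `φ` is a `K`-frame with lower bound `A` and upper bound `B`. -/
def IsKFrameWith (K : H2 →L[ℂ] H2) (φ : ℕ → H2) (A B : ℝ) : Prop :=
  0 < A ∧ 0 < B ∧ ∀ f : H2,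
    Summable (fun j : ℕ => ‖⟪f, φ j⟫‖ ^ 2) ∧
    A * ‖ContinuousLinearMap.adjoint K f‖ ^ 2 ≤ ∑' j : ℕ, ‖⟪f, φ j⟫‖ ^ 2 ∧
    ∑' j : ℕ, ‖⟪f, φ j⟫‖ ^ 2 ≤ B * ‖f‖ ^ 2

/-! ### Auxiliary lemmas -/

lemma inner_E (f : H2) (n : ℕ) : ⟪f, E n⟫ = starRingEnd ℂ (f n) := by
  simp [E, lp.inner_single_right]

lemma E_apply (m n : ℕ) : (E m : ∀ _ : ℕ, ℂ) n = if n = m then 1 else 0 := by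
  simp [E, lp.single_apply, Pi.single_apply]

lemma norm_inner_E (f : H2) (n : ℕ) : ‖⟪f, E n⟫‖ ^ 2 = ‖f n‖ ^ 2 := by
  rw [inner_E]; simp

lemma summable_norm_sq (f : H2) : Summable (fun k : ℕ => ‖f k‖ ^ 2) := by
  have h := (lp.memℓp f).summable (p := 2) (by norm_num)
  have h2 : ((2 : ENNReal).toReal) = ((2 : ℕ) : ℝ) := by norm_num
  simpa [h2, Real.rpow_natCast] using h

lemma norm_sq_eq (f : H2) : ‖f‖ ^ 2 = ∑' k : ℕ, ‖f k‖ ^ 2 := by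
  have h := lp.norm_rpow_eq_tsum (p := 2) (by norm_num) f
  have h2 : ((2 : ENNReal).toReal) = ((2 : ℕ) : ℝ) := by norm_num
  rw [h2] at h
  simpa [Real.rpow_natCast] using h

lemma Φ_two_mul (k : ℕ) : Φ (2 * k) = E k := by
  have h : (2 * k) / 2 = k := by omega
  simp only [Φ, if_pos (even_two_mul k), h]

lemma Φ_odd (n : ℕ) (h : ¬ Even n) : Φ n = 0 := if_neg h

lemma phi_summable (f : H2) : Summable (fun j : ℕ => ‖⟪f, Φ j⟫‖ ^ 2) := by
  have hinj : Function.Injective (fun k : ℕ => 2 * k) := fun a b h => by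
    have : 2 * a = 2 * b := h
    omega
  have hvan : ∀ x ∉ Set.range (fun k : ℕ => 2 * k), ‖⟪f, Φ x⟫‖ ^ 2 = 0 := by
    intro x hx
    have hodd : ¬ Even x := by
      rintro ⟨c, rfl⟩; exact hx ⟨c, by show 2 * c = c + c; omega⟩
    rw [Φ_odd x hodd]; simp
  rw [← hinj.summable_iff hvan]
  refine (summable_norm_sq f).congr fun k => ?_
  simp only [Function.comp_apply]
  rw [Φ_two_mul, norm_inner_E]

lemma phi_tsum (f : H2) : ∑' j : ℕ, ‖⟪f, Φ j⟫‖ ^ 2 = ‖f‖ ^ 2 := by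
  have hinj : Function.Injective (fun k : ℕ => 2 * k) := fun a b h => by
    have : 2 * a = 2 * b := h
    omega
  have hsupp : Function.support (fun j : ℕ => ‖⟪f, Φ j⟫‖ ^ 2)
      ⊆ Set.range (fun k : ℕ => 2 * k) := by
    intro x hx
    by_contra hr
    have hodd : ¬ Even x := by
      rintro ⟨c, rfl⟩; exact hr ⟨c, by show 2 * c = c + c; omega⟩
    apply hx
    show ‖⟪f, Φ x⟫‖ ^ 2 = 0
    rw [Φ_odd x hodd]; simp
  rw [← hinj.tsum_eq hsupp, norm_sq_eq]
  congr 1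
  funext k; rw [Φ_two_mul, norm_inner_E]

lemma mem_S_E (k : ℕ) : E (k + 1) ∈ S :=
  Submodule.le_topologicalClosure _ (Submodule.subset_span ⟨k, rfl⟩)

lemma adjK (K : H2 →L[ℂ] H2) (hK₁ : ∀ f : H2, K f ∈ S) (hK₂ : ∀ f : H2, f - K f ∈ Sᗮ) :
    ContinuousLinearMap.adjoint K = K := by
  refine ((ContinuousLinearMap.eq_adjoint_iff K K).2 fun x y => ?_).symm
  have h1 : ⟪K x, y - K y⟫ = 0 := (Submodule.mem_orthogonal S _).1 (hK₂ y) (K x) (hK₁ x)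
  have h2 : ⟪K y, x - K x⟫ = 0 := (Submodule.mem_orthogonal S _).1 (hK₂ x) (K y) (hK₁ y)
  have h2' : ⟪x - K x, K y⟫ = 0 := inner_eq_zero_symm.mp h2
  have e1 : ⟪K x, y⟫ = ⟪K x, K y⟫ :=
    sub_eq_zero.mp (by rw [← inner_sub_right]; exact h1)
  have e2 : ⟪x, K y⟫ = ⟪K x, K y⟫ :=
    sub_eq_zero.mp (by rw [← inner_sub_left]; exact h2')
  rw [e1, e2]

lemma KE1 (K : H2 →L[ℂ] H2) (hK₁ : ∀ f : H2, K f ∈ S) (hK₂ : ∀ f : H2, f - K f ∈ Sᗮ) :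
    K (E 1) = E 1 := by
  have hE : E 1 ∈ S := mem_S_E 0
  have hv : E 1 - K (E 1) ∈ S := Submodule.sub_mem S hE (hK₁ _)
  have h0 : ⟪E 1 - K (E 1), E 1 - K (E 1)⟫ = 0 :=
    (Submodule.mem_orthogonal S _).1 (hK₂ (E 1)) _ hv
  have hz : E 1 - K (E 1) = 0 := inner_self_eq_zero.mp h0
  have := sub_eq_zero.mp hz
  exact this.symm

lemma Kle (K : H2 →L[ℂ] H2) (hK₁ : ∀ f : H2, K f ∈ S) (hK₂ : ∀ f : H2, f - K f ∈ Sᗮ)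
    (f : H2) : ‖K f‖ ≤ ‖f‖ := by
  have h1 : ⟪K f, f - K f⟫ = 0 := (Submodule.mem_orthogonal S _).1 (hK₂ f) _ (hK₁ f)
  have e1 : ⟪K f, K f⟫ = ⟪K f, f⟫ :=
    (sub_eq_zero.mp (by rw [← inner_sub_right]; exact h1)).symm
  have h2 : ‖K f‖ ^ 2 ≤ ‖K f‖ * ‖f‖ := by
    calc ‖K f‖ ^ 2 = RCLike.re ⟪K f, K f⟫ := by
          rw [@inner_self_eq_norm_sq ℂ]
      _ = RCLike.re ⟪K f, f⟫ := by rw [e1]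
      _ ≤ ‖⟪K f, f⟫‖ := RCLike.re_le_norm _
      _ ≤ ‖K f‖ * ‖f‖ := norm_inner_le_norm _ _
  rcases (norm_nonneg (K f)).eq_or_lt with h | h
  · rw [← h]; exact norm_nonneg f
  · nlinarith

lemma normE1sq : ‖E 1‖ ^ 2 = 1 := by
  rw [norm_sq_eq]
  have h : ∀ k : ℕ, ‖(E 1 : ∀ _ : ℕ, ℂ) k‖ ^ 2 = if k = 1 then (1 : ℝ) else 0 := by
    intro k; rw [E_apply]; split_ifs <;> simp
  rw [tsum_congr h]
  exact tsum_ite_eq 1 1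

lemma psi_bounds (f : H2) : Summable (fun j : ℕ => ‖⟪f, Ψ j⟫‖ ^ 2) ∧
    ‖f‖ ^ 2 ≤ ∑' j : ℕ, ‖⟪f, Ψ j⟫‖ ^ 2 ∧ ∑' j : ℕ, ‖⟪f, Ψ j⟫‖ ^ 2 ≤ 2 * ‖f‖ ^ 2 := by
  have hsa := summable_norm_sq f
  have heven : ∀ k : ℕ, ‖⟪f, Ψ (2 * k)⟫‖ ^ 2
      = if k = 0 ∨ k = 1 then 0 else ‖f k‖ ^ 2 := by
    intro k
    by_cases h : k = 0 ∨ k = 1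
    · rw [if_pos h]
      have : Ψ (2 * k) = 0 := if_pos (by omega)
      rw [this]; simp
    · rw [if_neg h]
      have hdiv : (2 * k) / 2 = k := by omega
      have : Ψ (2 * k) = E k := by
        simp only [Ψ]; rw [if_neg (by omega), hdiv]
      rw [this, norm_inner_E]
  have hodd : ∀ k : ℕ, ‖⟪f, Ψ (2 * k + 1)⟫‖ ^ 2 = ‖f k‖ ^ 2 := by
    intro k
    have hdiv : (2 * k + 1) / 2 = k := by omega
    have : Ψ (2 * k + 1) = E k := by
      simp only [Ψ]; rw [if_neg (by omega), hdiv]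
    rw [this, norm_inner_E]
  have hse : Summable (fun k : ℕ => if k = 0 ∨ k = 1 then (0 : ℝ) else ‖f k‖ ^ 2) := by
    refine Summable.of_nonneg_of_le (fun k => ?_) (fun k => ?_) hsa
    · split_ifs <;> positivity
    · split_ifs with h
      · positivity
      · exact le_rfl
  have hhe : HasSum (fun k : ℕ => ‖⟪f, Ψ (2 * k)⟫‖ ^ 2)
      (∑' k : ℕ, if k = 0 ∨ k = 1 then (0 : ℝ) else ‖f k‖ ^ 2) := by
    simp only [heven]; exact hse.hasSum
  have hho : HasSum (fun k : ℕ => ‖⟪f, Ψ (2 * k + 1)⟫‖ ^ 2) (‖f‖ ^ 2) := by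
    simp only [hodd]; rw [norm_sq_eq]; exact hsa.hasSum
  have htot : HasSum (fun j : ℕ => ‖⟪f, Ψ j⟫‖ ^ 2)
      ((∑' k : ℕ, if k = 0 ∨ k = 1 then (0 : ℝ) else ‖f k‖ ^ 2) + ‖f‖ ^ 2) :=
    HasSum.even_add_odd (f := fun j : ℕ => ‖⟪f, Ψ j⟫‖ ^ 2) hhe hho
  have hTe0 : 0 ≤ ∑' k : ℕ, if k = 0 ∨ k = 1 then (0 : ℝ) else ‖f k‖ ^ 2 :=
    tsum_nonneg fun k => by split_ifs <;> positivity
  have hTe1 : (∑' k : ℕ, if k = 0 ∨ k = 1 then (0 : ℝ) else ‖f k‖ ^ 2) ≤ ‖f‖ ^ 2 := by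
    rw [norm_sq_eq]
    refine Summable.tsum_le_tsum (fun k => ?_) hse hsa
    split_ifs with h
    · positivity
    · exact le_rfl
  refine ⟨htot.summable, ?_, ?_⟩
  · rw [htot.tsum_eq]; linarith
  · rw [htot.tsum_eq]; linarith

theorem stmt14 (K : H2 →L[ℂ] H2)
    -- K is the orthogonal projection of H2 onto S
    (hK₁ : ∀ f : H2, K f ∈ S) (hK₂ : ∀ f : H2, f - K f ∈ Sᗮ) :
    (∃ A B : ℝ, IsKFrameWith K Φ A B) ∧
    (∃ A B : ℝ, IsKFrameWith K Ψ A B) ∧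
    (∑' j : σ₀, ‖⟪E 1, Φ (j : ℕ)⟫‖ ^ 2 + ∑' j : ↥σ₀ᶜ, ‖⟪E 1, Ψ (j : ℕ)⟫‖ ^ 2 = 0) ∧
    ‖ContinuousLinearMap.adjoint K (E 1)‖ ^ 2 = 1 ∧
    -- the weaving along σ₀ is not a K-frame
    ¬ ∃ A B : ℝ, 0 < A ∧ 0 < B ∧ ∀ f : H2,
        Summable (fun j : σ₀ => ‖⟪f, Φ (j : ℕ)⟫‖ ^ 2) ∧
        Summable (fun j : ↥σ₀ᶜ => ‖⟪f, Ψ (j : ℕ)⟫‖ ^ 2) ∧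
        A * ‖ContinuousLinearMap.adjoint K f‖ ^ 2 ≤
          ∑' j : σ₀, ‖⟪f, Φ (j : ℕ)⟫‖ ^ 2 + ∑' j : ↥σ₀ᶜ, ‖⟪f, Ψ (j : ℕ)⟫‖ ^ 2 ∧
        ∑' j : σ₀, ‖⟪f, Φ (j : ℕ)⟫‖ ^ 2 + ∑' j : ↥σ₀ᶜ, ‖⟪f, Ψ (j : ℕ)⟫‖ ^ 2 ≤
          B * ‖f‖ ^ 2 := by
  have hadj := adjK K hK₁ hK₂
  have hKle : ∀ f : H2, ‖ContinuousLinearMap.adjoint K f‖ ≤ ‖f‖ := by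
    intro f; rw [hadj]; exact Kle K hK₁ hK₂ f
  have hKsq : ∀ f : H2, ‖ContinuousLinearMap.adjoint K f‖ ^ 2 ≤ ‖f‖ ^ 2 := fun f =>
    pow_le_pow_left₀ (norm_nonneg _) (hKle f) 2
  -- the weaving sums at E 1 vanish
  have keyΦ : ∑' j : σ₀, ‖⟪E 1, Φ (j : ℕ)⟫‖ ^ 2 = 0 := by
    have hterm : ∀ j : σ₀, ‖⟪E 1, Φ (j : ℕ)⟫‖ ^ 2 = 0 := by
      rintro ⟨j, hj0, hj2⟩
      by_cases hje : Even j
      · have hΦ : Φ j = E (j / 2) := if_pos hje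
        obtain ⟨c, hc⟩ := hje
        have hne : j / 2 ≠ 1 := by omega
        simp only [hΦ, inner_E, E_apply, if_neg hne]
        simp
      · rw [Φ_odd j hje]; simp
    rw [tsum_congr hterm]; exact tsum_zero
  have keyΨ : ∑' j : ↥σ₀ᶜ, ‖⟪E 1, Ψ (j : ℕ)⟫‖ ^ 2 = 0 := by
    have hterm : ∀ j : ↥σ₀ᶜ, ‖⟪E 1, Ψ (j : ℕ)⟫‖ ^ 2 = 0 := by
      rintro ⟨j, hj⟩
      have hj' : j = 0 ∨ j = 2 := by
        by_contra h
        push_neg at h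
        exact hj ⟨h.1, h.2⟩
      have : Ψ j = 0 := if_pos hj'
      rw [this]; simp
    rw [tsum_congr hterm]; exact tsum_zero
  have key4 : ‖ContinuousLinearMap.adjoint K (E 1)‖ ^ 2 = 1 := by
    rw [hadj, KE1 K hK₁ hK₂]; exact normE1sq
  refine ⟨⟨1, 1, one_pos, one_pos, fun f => ?_⟩,
          ⟨1, 2, one_pos, two_pos, fun f => ?_⟩,
          by rw [keyΦ, keyΨ]; ring, key4, ?_⟩
  · refine ⟨phi_summable f, ?_, ?_⟩
    · rw [phi_tsum, one_mul]; exact hKsq f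
    · rw [phi_tsum, one_mul]
  · obtain ⟨hs, hl, hu⟩ := psi_bounds f
    exact ⟨hs, by rw [one_mul]; exact le_trans (hKsq f) hl, hu⟩
  · rintro ⟨A, B, hA, hB, h⟩
    obtain ⟨-, -, hlow, -⟩ := h (E 1)
    rw [keyΦ, keyΨ, key4] at hlow
    nlinarith
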